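/- The polynomial g = x1^2 + x2^3 + x3^3 + x4^3 + a·x2 x3 x4 over C has an isolated singularity at the origin (the vanishing locus of g and all its partial derivatives, near 0, is just {0}) if and only if a^3 + 27 ≠ 0. -/

import Mathlib

open MvPolynomial

/-- The equation of the `T_{333}` singularity with parameter `a`:
`x1^2 + x2^3 + x3^3 + x4^3 + a*x2*x3*x4`. -/
noncomputable def gT (a : ℂ) : MvPolynomial (Fin 4) ℂ :=
  X 0 ^ 2 + X 1 ^ 3 + X 2 ^ 3 + X 3 ^ 3 + C a * (X 1 * X 2 * X 3)

lemma gT_eval (a : ℂ) (x : Fin 4 → ℂ) :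
    eval x (gT a) = x 0 ^ 2 + x 1 ^ 3 + x 2 ^ 3 + x 3 ^ 3 + a * (x 1 * x 2 * x 3) := by
  simp [gT]

lemma gT_pd0 (a : ℂ) (x : Fin 4 → ℂ) :
    eval x (pderiv 0 (gT a)) = 2 * x 0 := by
  simp [gT] <;> exact Or.inl (by ring)

lemma gT_pd1 (a : ℂ) (x : Fin 4 → ℂ) :
    eval x (pderiv 1 (gT a)) = 3 * x 1 ^ 2 + a * (x 2 * x 3) := by
  simp [gT] <;> exact Or.inl (by ring)

lemma gT_pd2 (a : ℂ) (x : Fin 4 → ℂ) :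
    eval x (pderiv 2 (gT a)) = 3 * x 2 ^ 2 + a * (x 1 * x 3) := by
  simp [gT] <;> exact Or.inl (by ring)

lemma gT_pd3 (a : ℂ) (x : Fin 4 → ℂ) :
    eval x (pderiv 3 (gT a)) = 3 * x 3 ^ 2 + a * (x 1 * x 2) := by
  simp [gT] <;> exact Or.inl (by ring)

/-- The polynomial `gT a` has an isolated singularity at the origin (near the origin, the
common vanishing locus of `g` and all of its partial derivatives is just `{0}`) if and only
if `a^3 + 27 ≠ 0`. -/
theorem T333_isolated_iff (a : ℂ) :
    (∃ ε > (0 : ℝ), ∀ x : Fin 4 → ℂ, ‖x‖ < ε →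
      eval x (gT a) = 0 → (∀ i : Fin 4, eval x (pderiv i (gT a)) = 0) → x = 0) ↔
    a ^ 3 + 27 ≠ 0 := by
  constructor
  · -- contrapositive: if a^3 + 27 = 0, build nonzero critical points arbitrarily close to 0
    intro ⟨ε, hε, H⟩ ha
    have ha0 : a ≠ 0 := by
      intro h; rw [h] at ha; norm_num at ha
    set v : ℂ := -3 / a with hv
    -- take the point (0, t, t, t*v) with t small and positive
    set t : ℝ := ε / (2 * (‖v‖ + 1)) with ht
    have hvpos : (0:ℝ) < ‖v‖ + 1 := by positivity
    have htpos : 0 < t := by positivity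
    set x : Fin 4 → ℂ := ![0, (t:ℂ), (t:ℂ), (t:ℂ) * v] with hx
    have hxn : ‖x‖ < ε := by
      rw [pi_norm_lt_iff hε]
      intro i
      have h1 : ‖(t:ℂ)‖ < ε := by
        rw [Complex.norm_real, Real.norm_eq_abs, abs_of_pos htpos, ht]
        rw [div_lt_iff₀ (by positivity)]
        nlinarith [norm_nonneg v]
      have h2 : ‖(t:ℂ) * v‖ < ε := by
        rw [norm_mul, Complex.norm_real, Real.norm_eq_abs, abs_of_pos htpos, ht]
        rw [div_mul_eq_mul_div, div_lt_iff₀ (by positivity)]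
        nlinarith [norm_nonneg v]
      fin_cases i
      · show ‖(0:ℂ)‖ < ε; simpa using hε
      · exact h1
      · exact h1
      · exact h2
    have hav : a * v = -3 := by
      rw [hv]; field_simp
    have ha3 : a ^ 3 = -27 := by linear_combination ha
    have hv3 : v ^ 3 = 1 := by
      rw [hv]
      rw [div_pow, ha3]
      norm_num
    have hg : eval x (gT a) = 0 := by
      rw [gT_eval]
      show (0:ℂ) ^ 2 + (t:ℂ) ^ 3 + (t:ℂ) ^ 3 + ((t:ℂ) * v) ^ 3 + a * ((t:ℂ) * (t:ℂ) * ((t:ℂ) * v)) = 0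
      have : ((t:ℂ)*v)^3 = (t:ℂ)^3 * v^3 := by ring
      rw [this, hv3]
      linear_combination ((t:ℂ)^3) * hav
    have hpd : ∀ i : Fin 4, eval x (pderiv i (gT a)) = 0 := by
      intro i
      fin_cases i
      · show eval x (pderiv 0 (gT a)) = 0
        rw [gT_pd0]; show 2 * (0:ℂ) = 0; ring
      · show eval x (pderiv 1 (gT a)) = 0
        rw [gT_pd1]
        show 3 * (t:ℂ) ^ 2 + a * ((t:ℂ) * ((t:ℂ) * v)) = 0
        linear_combination ((t:ℂ)^2) * hav
      · show eval x (pderiv 2 (gT a)) = 0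
        rw [gT_pd2]
        show 3 * (t:ℂ) ^ 2 + a * ((t:ℂ) * ((t:ℂ) * v)) = 0
        linear_combination ((t:ℂ)^2) * hav
      · show eval x (pderiv 3 (gT a)) = 0
        rw [gT_pd3]
        show 3 * ((t:ℂ) * v) ^ 2 + a * ((t:ℂ) * (t:ℂ)) = 0
        have key3 : 3 * v ^ 2 + a = 0 := by
          have h2 : a ^ 2 * (3 * v ^ 2 + a) = 0 := by
            linear_combination (3 * (a * v - 3)) * hav + ha3
          have ha2 : a ^ 2 ≠ 0 := pow_ne_zero _ ha0
          exact (mul_eq_zero.mp h2).resolve_left ha2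
        linear_combination ((t:ℂ)^2) * key3
    have := H x hxn hg hpd
    have : x 1 = 0 := by rw [this]; rfl
    have ht0 : (t:ℂ) ≠ 0 := Complex.ofReal_ne_zero.mpr (ne_of_gt htpos)
    exact ht0 (by simpa [hx] using this)
  · -- if a^3+27 ≠ 0, all critical points are 0 (globally): take ε = 1
    intro ha
    refine ⟨1, one_pos, fun x _ _ hpd => ?_⟩
    have h0 : 2 * x 0 = 0 := by rw [← gT_pd0 a x]; exact hpd 0
    have h1 : 3 * x 1 ^ 2 + a * (x 2 * x 3) = 0 := by rw [← gT_pd1 a x]; exact hpd 1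
    have h2 : 3 * x 2 ^ 2 + a * (x 1 * x 3) = 0 := by rw [← gT_pd2 a x]; exact hpd 2
    have h3 : 3 * x 3 ^ 2 + a * (x 1 * x 2) = 0 := by rw [← gT_pd3 a x]; exact hpd 3
    have hx0 : x 0 = 0 := by
      have : (2:ℂ) ≠ 0 := two_ne_zero
      exact (mul_eq_zero.mp h0).resolve_left this
    have key : (a ^ 3 + 27) * (x 1 * x 2 * x 3) ^ 2 = 0 := by
      linear_combination (a^2 * x 1 ^2 * x 2 * x 3) * h1 + (-3*a* x 1 ^3 * x 2) * h2
        + (9 * x 1 ^2 * x 2 ^2) * h3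
    have hp : x 1 * x 2 * x 3 = 0 := by
      have := (mul_eq_zero.mp key).resolve_left ha
      exact pow_eq_zero_iff (n := 2) (by norm_num) |>.mp this
    have h123 : x 1 = 0 ∧ x 2 = 0 ∧ x 3 = 0 := by
      rcases mul_eq_zero.mp hp with h | hc3
      · rcases mul_eq_zero.mp h with hc1 | hc2
        · -- x1 = 0 : then 3 x2^2 = 0 and 3 x3^2 = 0
          have hx2 : x 2 = 0 := by
            have : (3:ℂ) * x 2 ^ 2 = 0 := by linear_combination h2 - (a * x 3) * hc1
            have := (mul_eq_zero.mp this).resolve_left (by norm_num)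
            exact pow_eq_zero_iff (n := 2) (by norm_num) |>.mp this
          have hx3 : x 3 = 0 := by
            have : (3:ℂ) * x 3 ^ 2 = 0 := by linear_combination h3 - (a * x 2) * hc1
            have := (mul_eq_zero.mp this).resolve_left (by norm_num)
            exact pow_eq_zero_iff (n := 2) (by norm_num) |>.mp this
          exact ⟨hc1, hx2, hx3⟩
        · have hx1 : x 1 = 0 := by
            have : (3:ℂ) * x 1 ^ 2 = 0 := by linear_combination h1 - (a * x 3) * hc2
            have := (mul_eq_zero.mp this).resolve_left (by norm_num)
            exact pow_eq_zero_iff (n := 2) (by norm_num) |>.mp this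
          have hx3 : x 3 = 0 := by
            have : (3:ℂ) * x 3 ^ 2 = 0 := by linear_combination h3 - (a * x 1) * hc2
            have := (mul_eq_zero.mp this).resolve_left (by norm_num)
            exact pow_eq_zero_iff (n := 2) (by norm_num) |>.mp this
          exact ⟨hx1, hc2, hx3⟩
      · have hx1 : x 1 = 0 := by
          have : (3:ℂ) * x 1 ^ 2 = 0 := by linear_combination h1 - (a * x 2) * hc3
          have := (mul_eq_zero.mp this).resolve_left (by norm_num)
          exact pow_eq_zero_iff (n := 2) (by norm_num) |>.mp this
        have hx2 : x 2 = 0 := by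
          have : (3:ℂ) * x 2 ^ 2 = 0 := by linear_combination h2 - (a * x 1) * hc3
          have := (mul_eq_zero.mp this).resolve_left (by norm_num)
          exact pow_eq_zero_iff (n := 2) (by norm_num) |>.mp this
        exact ⟨hx1, hx2, hc3⟩
    funext i
    fin_cases i
    · show x 0 = 0; exact hx0
    · show x 1 = 0; exact h123.1
    · show x 2 = 0; exact h123.2.1
    · show x 3 = 0; exact h123.2.2
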